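/- Suppose for every n, p_{ε,n}·p_{ε−1,n} < 0 for all ε ∈ {1,…,d_n−1}, and the limits lim_n ∏_{k=1}^n d_k p_{0,k} and lim_n ∏_{k=1}^n d_k p_{d_k−1,k} are not both 0. Then at every nega-(d_n)-rational point x₀ of [0,1], F̃ is not differentiable: the right and left difference quotients along the sequences x'_k = x₀ + 1/(d₁⋯d_{n+k}) and x''_k = x₀ − 1/(d₁⋯d_{n+k}) have distinct limits (finite or infinite). -/

import Mathlib

/-- The nega-(d_n) value of a digit sequence: ∑_{n≥1} (-1)^{n+1}(1+ε_n)/(d₁⋯d_n). -/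
noncomputable def negaVal (d : ℕ → ℕ) (ε : ℕ → ℕ) : ℝ :=
  ∑' n : ℕ, (-1 : ℝ) ^ (n + 2) * (1 + (ε (n + 1) : ℝ)) / ∏ j ∈ Finset.Icc 1 (n + 1), (d j : ℝ)

/-- ε is a nega-(d_n) representation of x. -/
def IsNegaRepr (d : ℕ → ℕ) (ε : ℕ → ℕ) (x : ℝ) : Prop :=
  (∀ n, 1 ≤ n → ε n < d n) ∧ x = negaVal d ε

/-- β_{i,n} = ∑_{t<i} p_{t,n}. -/
noncomputable def beta (p : ℕ → ℕ → ℝ) (i n : ℕ) : ℝ := ∑ t ∈ Finset.range i, p t n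

/-- p̃_{i,n}: digit i for odd n, digit d_n−1−i for even n. -/
noncomputable def ptil (d : ℕ → ℕ) (p : ℕ → ℕ → ℝ) (i n : ℕ) : ℝ :=
  if Odd n then p i n else p (d n - 1 - i) n

/-- β̃_{i,n}: β at digit i for odd n, at d_n−1−i for even n. -/
noncomputable def betatil (d : ℕ → ℕ) (p : ℕ → ℕ → ℝ) (i n : ℕ) : ℝ :=
  if Odd n then beta p i n else beta p (d n - 1 - i) n

/-- F̃ value on a digit sequence:
β_{ε₁,1} + ∑_{n≥2} β̃_{ε_n,n} ∏_{j<n} p̃_{ε_j,j}. -/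
noncomputable def Ftil (d : ℕ → ℕ) (p : ℕ → ℕ → ℝ) (ε : ℕ → ℕ) : ℝ :=
  beta p (ε 1) 1 +
    ∑' n : ℕ, betatil d p (ε (n + 2)) (n + 2) * ∏ j ∈ Finset.Icc 1 (n + 1), ptil d p (ε j) j

open Filter Finset Topology

namespace NP

noncomputable def DD (d : ℕ → ℕ) (m : ℕ) : ℝ := ∏ j ∈ Finset.Icc 1 m, (d j : ℝ)

def Valid (d : ℕ → ℕ) (ε : ℕ → ℕ) : Prop := ∀ j, 1 ≤ j → ε j < d j

variable {d : ℕ → ℕ} {p : ℕ → ℕ → ℝ}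

lemma DD_zero : DD d 0 = 1 := by simp [DD]

lemma DD_succ (m : ℕ) : DD d (m+1) = DD d m * d (m+1) :=
  Finset.prod_Icc_succ_top (by omega) _

lemma DD_pos (hd : ∀ n, 1 ≤ n → 2 ≤ d n) (m : ℕ) : 0 < DD d m := by
  refine Finset.prod_pos fun j hj => ?_
  rw [Finset.mem_Icc] at hj
  have := hd j hj.1
  exact_mod_cast Nat.lt_of_lt_of_le Nat.zero_lt_two this

lemma DD_ne (hd : ∀ n, 1 ≤ n → 2 ≤ d n) (m : ℕ) : DD d m ≠ 0 :=
  ne_of_gt (DD_pos hd m)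

lemma two_pow_le_DD (hd : ∀ n, 1 ≤ n → 2 ≤ d n) (m : ℕ) : (2:ℝ)^m ≤ DD d m := by
  induction m with
  | zero => simp [DD]
  | succ k ih =>
    rw [DD_succ, pow_succ]
    have h2 : (2:ℝ) ≤ d (k+1) := by exact_mod_cast hd (k+1) (by omega)
    have hk : (0:ℝ) < 2^k := pow_pos (by norm_num) k
    nlinarith

lemma one_div_DD_le (hd : ∀ n, 1 ≤ n → 2 ≤ d n) {k m : ℕ} (h : k ≤ m) :
    1 / DD d m ≤ (1/2:ℝ)^k := by
  have h1 : (2:ℝ)^k ≤ DD d m := by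
    calc (2:ℝ)^k ≤ 2^m := by
          apply pow_le_pow_right₀ (by norm_num) h
      _ ≤ DD d m := two_pow_le_DD hd m
  have h2 : (0:ℝ) < 2^k := pow_pos (by norm_num) k
  rw [div_pow, one_pow]
  exact one_div_le_one_div_of_le h2 h1

lemma tendsto_one_div_DD (hd : ∀ n, 1 ≤ n → 2 ≤ d n) (m : ℕ) :
    Tendsto (fun k => 1 / DD d (m + k)) atTop (nhds 0) := by
  apply squeeze_zero (fun k => le_of_lt (div_pos one_pos (DD_pos hd (m+k))))
      (g := fun k => (1/2:ℝ)^k)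
  · intro k
    exact one_div_DD_le hd (by omega)
  · exact tendsto_pow_atTop_nhds_zero_of_lt_one (by norm_num) (by norm_num)

/-- the k-th term of the negaVal series -/
noncomputable def nterm (d : ℕ → ℕ) (ε : ℕ → ℕ) (k : ℕ) : ℝ :=
  (-1 : ℝ) ^ (k + 2) * (1 + (ε (k + 1) : ℝ)) / DD d (k+1)

lemma negaVal_eq (ε : ℕ → ℕ) : negaVal d ε = ∑' k, nterm d ε k := rfl

lemma abs_nterm_le (hd : ∀ n, 1 ≤ n → 2 ≤ d n) {ε : ℕ → ℕ} (hε : Valid d ε) (k : ℕ) :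
    |nterm d ε k| ≤ (1/2:ℝ)^k := by
  have hD1 : 0 < DD d (k+1) := DD_pos hd (k+1)
  have hD0 : 0 < DD d k := DD_pos hd k
  have hdk : (1 + (ε (k+1):ℝ)) ≤ (d (k+1) : ℝ) := by
    have h := hε (k+1) (by omega)
    have : ε (k+1) + 1 ≤ d (k+1) := h
    push_cast
    linarith [(by exact_mod_cast this : (ε (k+1):ℝ) + 1 ≤ (d (k+1):ℝ))]
  have h1 : |nterm d ε k| = (1 + (ε (k+1):ℝ)) / DD d (k+1) := by
    rw [nterm, abs_div, abs_mul, abs_pow, abs_neg, abs_one, one_pow, one_mul,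
      abs_of_pos hD1, abs_of_pos (by positivity)]
  rw [h1]
  calc (1 + (ε (k+1):ℝ)) / DD d (k+1) ≤ (d (k+1):ℝ) / DD d (k+1) := by
        gcongr
    _ = 1 / DD d k := by
        rw [DD_succ]
        have : (d (k+1):ℝ) ≠ 0 := by
          have := hd (k+1) (by omega); positivity
        field_simp
    _ ≤ (1/2:ℝ)^k := one_div_DD_le hd le_rfl

lemma summable_nterm (hd : ∀ n, 1 ≤ n → 2 ≤ d n) {ε : ℕ → ℕ} (hε : Valid d ε) :
    Summable (nterm d ε) := by
  apply Summable.of_norm_bounded (g := fun k => (1/2:ℝ)^k)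
    (summable_geometric_of_lt_one (by norm_num) (by norm_num))
  intro k
  exact abs_nterm_le hd hε k


section Tail

lemma tt_eq (hd : ∀ n, 1 ≤ n → 2 ≤ d n) (m i : ℕ) :
    ((d (m + 1 + i) : ℝ) - 1) / DD d (m + 1 + i)
      = 1 / DD d (m + i) - 1 / DD d (m + i + 1) := by
  have h1 : m + 1 + i = m + i + 1 := by omega
  rw [h1, DD_succ]
  have hd0 : (0:ℝ) < d (m + i + 1) := by
    have := hd (m+i+1) (by omega)
    exact_mod_cast Nat.lt_of_lt_of_le Nat.zero_lt_two this
  have hD0 : (0:ℝ) < DD d (m + i) := DD_pos hd _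
  field_simp
  try ring

lemma tt_nonneg (hd : ∀ n, 1 ≤ n → 2 ≤ d n) (m i : ℕ) :
    0 ≤ ((d (m + 1 + i) : ℝ) - 1) / DD d (m + 1 + i) := by
  apply div_nonneg _ (le_of_lt (DD_pos hd _))
  have := hd (m+1+i) (by omega)
  have : (2:ℝ) ≤ d (m+1+i) := by exact_mod_cast this
  linarith

lemma tt_sum_range (hd : ∀ n, 1 ≤ n → 2 ≤ d n) (m N : ℕ) :
    ∑ i ∈ Finset.range N, ((d (m + 1 + i) : ℝ) - 1) / DD d (m + 1 + i)
      = 1 / DD d m - 1 / DD d (m + N) := by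
  have : ∀ i ∈ Finset.range N, ((d (m + 1 + i) : ℝ) - 1) / DD d (m + 1 + i)
      = (fun j => 1 / DD d (m + j)) i - (fun j => 1 / DD d (m + j)) (i+1) := by
    intro i _
    simpa [Nat.add_assoc] using tt_eq hd m i
  rw [Finset.sum_congr rfl this, Finset.sum_range_sub' (fun j => 1 / DD d (m + j)) N]
  simp

lemma summable_tt (hd : ∀ n, 1 ≤ n → 2 ≤ d n) (m : ℕ) :
    Summable (fun i => ((d (m + 1 + i) : ℝ) - 1) / DD d (m + 1 + i)) := by
  refine summable_of_sum_range_le (c := 1 / DD d m) (tt_nonneg hd m) ?_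
  intro N
  rw [tt_sum_range hd m N]
  have : 0 < 1 / DD d (m + N) := div_pos one_pos (DD_pos hd _)
  linarith

lemma tsum_tt (hd : ∀ n, 1 ≤ n → 2 ≤ d n) (m : ℕ) :
    ∑' i, ((d (m + 1 + i) : ℝ) - 1) / DD d (m + 1 + i) = 1 / DD d m := by
  have h1 := (summable_tt hd m).hasSum.tendsto_sum_nat
  have h2 : Tendsto (fun N => ∑ i ∈ Finset.range N,
      ((d (m + 1 + i) : ℝ) - 1) / DD d (m + 1 + i)) atTop (nhds (1 / DD d m)) := by
    have h3 : Tendsto (fun N => 1 / DD d m - 1 / DD d (m + N)) atTop (nhds (1 / DD d m - 0)) :=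
      Tendsto.sub tendsto_const_nhds (tendsto_one_div_DD hd m)
    rw [sub_zero] at h3
    exact h3.congr fun N => (tt_sum_range hd m N).symm
  exact tendsto_nhds_unique h1 h2

end Tail

section NegaLemmas

lemma negaVal_single (hd : ∀ n, 1 ≤ n → 2 ≤ d n) {α α' : ℕ → ℕ} (hα : Valid d α) (hα' : Valid d α') (m : ℕ) (hm : 1 ≤ m)
    (heq : ∀ j, 1 ≤ j → j ≠ m → α j = α' j) :
    negaVal d α' - negaVal d α = (-1:ℝ)^(m+1) * ((α' m : ℝ) - α m) / DD d m := by
  rw [negaVal_eq, negaVal_eq, ← Summable.tsum_sub (summable_nterm hd hα') (summable_nterm hd hα)]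
  have hsupp : ∀ b ∉ ({m-1} : Finset ℕ), nterm d α' b - nterm d α b = 0 := by
    intro b hb
    simp only [Finset.mem_singleton] at hb
    have : α (b+1) = α' (b+1) := heq (b+1) (by omega) (by omega)
    simp [nterm, this]
  rw [tsum_eq_sum hsupp, Finset.sum_singleton]
  have h1 : m - 1 + 1 = m := by omega
  have h2 : m - 1 + 2 = m + 1 := by omega
  rw [nterm, nterm, h1, h2]
  ring

lemma negaVal_tail (hd : ∀ n, 1 ≤ n → 2 ≤ d n) {α α' : ℕ → ℕ} (hα : Valid d α) (hα' : Valid d α') (m : ℕ)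
    (heq : ∀ j, 1 ≤ j → j ≤ m → α j = α' j)
    (htail : ∀ j, m < j → (-1:ℝ)^(j+1) * ((α' j : ℝ) - α j) = -((d j:ℝ) - 1)) :
    negaVal d α' - negaVal d α = -(1 / DD d m) := by
  have hsub : Summable (fun k => nterm d α' k - nterm d α k) :=
    (summable_nterm hd hα').sub (summable_nterm hd hα)
  rw [negaVal_eq, negaVal_eq, ← Summable.tsum_sub (summable_nterm hd hα') (summable_nterm hd hα)]
  have hsplit := Summable.sum_add_tsum_nat_add m hsub
  have hlow : ∑ i ∈ Finset.range m, (nterm d α' i - nterm d α i) = 0 := by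
    apply Finset.sum_eq_zero
    intro i hi
    rw [Finset.mem_range] at hi
    have : α (i+1) = α' (i+1) := heq (i+1) (by omega) (by omega)
    simp [nterm, this]
  have hterm : ∀ i, nterm d α' (i+m) - nterm d α (i+m)
      = -(((d (m+1+i):ℝ) - 1) / DD d (m+1+i)) := by
    intro i
    have hidx : i + m + 1 = m + 1 + i := by omega
    have hidx2 : i + m + 2 = (m + 1 + i) + 1 := by omega
    have ht := htail (m+1+i) (by omega)
    rw [nterm, nterm, hidx, hidx2]
    have hh : (-1:ℝ)^((m+1+i)+1) * (1 + (α' (m+1+i):ℝ)) / DD d (m+1+i)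
        - (-1:ℝ)^((m+1+i)+1) * (1 + (α (m+1+i):ℝ)) / DD d (m+1+i)
        = ((-1:ℝ)^((m+1+i)+1) * ((α' (m+1+i):ℝ) - (α (m+1+i):ℝ))) / DD d (m+1+i) := by
      ring
    rw [hh, ht]
    ring
  have htsum2 : ∑' i, (nterm d α' (i+m) - nterm d α (i+m)) = -(1 / DD d m) := by
    rw [tsum_congr hterm, tsum_neg, tsum_tt hd m]
  rw [← hsplit, hlow, zero_add, htsum2]

lemma negaVal_mem (hd : ∀ n, 1 ≤ n → 2 ≤ d n) {α : ℕ → ℕ} (hα : Valid d α) : negaVal d α ∈ Set.Icc (0:ℝ) 1 := by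
  have hterm_pos : ∀ k, Even k → nterm d α k = (1 + (α (k+1):ℝ)) / DD d (k+1) := by
    intro k hk
    have : (-1:ℝ)^(k+2) = 1 := (hk.add (by decide : Even 2)).neg_one_pow
    rw [nterm, this, one_mul]
  have hterm_neg : ∀ k, ¬ Even k → nterm d α k = -((1 + (α (k+1):ℝ)) / DD d (k+1)) := by
    intro k hk
    have hodd : Odd (k+2) := by
      rcases Nat.even_or_odd k with h | h
      · exact absurd h hk
      · exact h.add_even (by decide)
    have : (-1:ℝ)^(k+2) = -1 := hodd.neg_one_pow
    rw [nterm, this]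
    ring
  have hbound : ∀ k, 1 ≤ k → (1 + (α (k+1):ℝ)) / DD d (k+1) ≤ 1 / DD d k := by
    intro k hk
    have h1 : (1 + (α (k+1):ℝ)) ≤ (d (k+1):ℝ) := by
      have := hα (k+1) (by omega)
      have : α (k+1) + 1 ≤ d (k+1) := this
      have := (Nat.cast_le (α := ℝ)).mpr this
      push_cast at this
      linarith
    have hD1 : (0:ℝ) < DD d (k+1) := DD_pos hd _
    calc (1 + (α (k+1):ℝ)) / DD d (k+1) ≤ (d (k+1):ℝ) / DD d (k+1) := by gcongr
      _ = 1 / DD d k := by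
          rw [DD_succ]
          have h2 : (d (k+1):ℝ) ≠ 0 := by
            have := hd (k+1) (by omega)
            have : (0:ℕ) < d (k+1) := by omega
            exact_mod_cast Nat.pos_iff_ne_zero.mp this
          have h3 : DD d k ≠ 0 := DD_ne hd k
          field_simp

  have hlb : ∀ k, 1 / DD d k ≤ (1 + (α k:ℝ)) / DD d k := by
    intro k
    have hD : (0:ℝ) < DD d k := DD_pos hd _
    gcongr
    · linarith [Nat.cast_nonneg (α := ℝ) (α k)]
  -- pair inequalities
  have hpair1 : ∀ N, 0 ≤ nterm d α (2*N) + nterm d α (2*N+1) := by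
    intro N
    rw [hterm_pos (2*N) ⟨N, by ring⟩, hterm_neg (2*N+1) (by simp [Nat.even_add_one, parity_simps])]
    have e1 : 2*N+1+1 = 2*N+2 := by omega
    rw [e1]
    have h2 := hbound (2*N+1) (by omega)
    have h3 := hlb (2*N+1)
    have e3 : 2*N+1+1 = 2*N+2 := by omega
    rw [e3] at h2
    linarith
  have hpair2 : ∀ N, nterm d α (2*N+1) + nterm d α (2*N+2) ≤ 0 := by
    intro N
    rw [hterm_neg (2*N+1) (by simp [Nat.even_add_one, parity_simps]),
        hterm_pos (2*N+2) ⟨N+1, by ring⟩]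
    have e1 : 2*N+1+1 = 2*N+2 := by omega
    have e2 : 2*N+2+1 = 2*N+3 := by omega
    rw [e1, e2]
    have h2 := hbound (2*N+2) (by omega)
    have h3 := hlb (2*N+2)
    have e3 : 2*N+2+1 = 2*N+3 := by omega
    rw [e3] at h2
    linarith
  -- partial sums
  set S : ℕ → ℝ := fun N => ∑ k ∈ Finset.range N, nterm d α k with hS
  have hSeven : ∀ N, 0 ≤ S (2*N) := by
    intro N
    induction N with
    | zero => simp [hS]
    | succ M ih =>
      have e : 2*(M+1) = (2*M + 1) + 1 := by omega
      rw [e]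
      show 0 ≤ ∑ k ∈ Finset.range ((2*M+1)+1), nterm d α k
      rw [Finset.sum_range_succ, Finset.sum_range_succ]
      have := hpair1 M
      have ih' : 0 ≤ ∑ k ∈ Finset.range (2*M), nterm d α k := ih
      linarith
  have hSodd : ∀ N, S (2*N+1) ≤ 1 := by
    intro N
    induction N with
    | zero =>
      simp only [hS]
      rw [Finset.sum_range_one]
      rw [hterm_pos 0 (by decide)]
      have h1 : DD d 1 = d 1 := by
        rw [DD]
        simp
      have hd1 : (2:ℝ) ≤ d 1 := by exact_mod_cast hd 1 le_rfl
      have hb : (1 + (α (0+1):ℝ)) ≤ (d 1 : ℝ) := by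
        have := hα 1 le_rfl
        have : α 1 + 1 ≤ d 1 := this
        have := (Nat.cast_le (α := ℝ)).mpr this
        push_cast at this
        simpa using by linarith
      rw [h1]
      rw [div_le_one (by linarith)]
      simpa using hb
    | succ M ih =>
      have e : 2*(M+1)+1 = (2*M+1) + 1 + 1 := by omega
      rw [e]
      show (∑ k ∈ Finset.range ((2*M+1)+1+1), nterm d α k) ≤ 1
      rw [Finset.sum_range_succ, Finset.sum_range_succ]
      have := hpair2 M
      have ih' : (∑ k ∈ Finset.range (2*M+1), nterm d α k) ≤ 1 := ih
      have e2 : 2*M+1+1 = 2*M+2 := by omega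
      rw [e2]
      linarith
  have htend : Tendsto S atTop (nhds (negaVal d α)) := by
    rw [negaVal_eq]
    exact (summable_nterm hd hα).hasSum.tendsto_sum_nat
  have hmono : Tendsto (fun N => 2*N) atTop (atTop : Filter ℕ) :=
    Filter.tendsto_atTop_mono (fun N => by simpa using (by omega : N ≤ 2*N)) tendsto_id
  have hmono2 : Tendsto (fun N => 2*N+1) atTop (atTop : Filter ℕ) :=
    Filter.tendsto_atTop_mono (fun N => by simpa using (by omega : N ≤ 2*N+1)) tendsto_id
  constructor
  · exact ge_of_tendsto (htend.comp hmono) (Eventually.of_forall hSeven)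
  · exact le_of_tendsto (htend.comp hmono2) (Eventually.of_forall hSodd)

end NegaLemmas


section Beta

lemma beta_zero (n : ℕ) : beta p 0 n = 0 := by simp [beta]

lemma beta_succ (i n : ℕ) : beta p (i+1) n = beta p i n + p i n := by
  rw [beta, beta, Finset.sum_range_succ]

lemma beta_one (n : ℕ) : beta p 1 n = p 0 n := by simp [beta]

lemma beta_two (n : ℕ) : beta p 2 n = p 0 n + p 1 n := by
  rw [beta]
  rw [Finset.sum_range_succ, Finset.sum_range_one]

lemma betatil_odd {m : ℕ} (h : Odd m) (i : ℕ) : betatil d p i m = beta p i m := if_pos h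

lemma betatil_even {m : ℕ} (h : ¬ Odd m) (i : ℕ) :
    betatil d p i m = beta p (d m - 1 - i) m := if_neg h

lemma ptil_odd {m : ℕ} (h : Odd m) (i : ℕ) : ptil d p i m = p i m := if_pos h

lemma ptil_even {m : ℕ} (h : ¬ Odd m) (i : ℕ) : ptil d p i m = p (d m - 1 - i) m := if_neg h

/-- the β̃=0 tail digits -/
def tailseq (d : ℕ → ℕ) (j : ℕ) : ℕ := if Odd j then 0 else d j - 1

lemma betatil_tailseq (m : ℕ) : betatil d p (tailseq d m) m = 0 := by
  by_cases h : Odd m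
  · rw [tailseq, if_pos h, betatil_odd h, beta_zero]
  · rw [tailseq, if_neg h, betatil_even h, Nat.sub_self, beta_zero]

end Beta

section FtilLemmas

/-- The n-th term of the Ftil series. -/
noncomputable def Fterm (d : ℕ → ℕ) (p : ℕ → ℕ → ℝ) (ε : ℕ → ℕ) (k : ℕ) : ℝ :=
  betatil d p (ε (k + 2)) (k + 2) * ∏ j ∈ Finset.Icc 1 (k + 1), ptil d p (ε j) j

lemma Ftil_def (ε : ℕ → ℕ) :
    Ftil d p ε = beta p (ε 1) 1 + ∑' k, Fterm d p ε k := rfl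

lemma Ftil_eq_sum {ε : ℕ → ℕ} {K : ℕ}
    (h : ∀ k, K ≤ k → betatil d p (ε (k+2)) (k+2) = 0) :
    Ftil d p ε = beta p (ε 1) 1 + ∑ k ∈ Finset.range K, Fterm d p ε k := by
  rw [Ftil_def]
  congr 1
  apply tsum_eq_sum
  intro b hb
  rw [Finset.mem_range, not_lt] at hb
  rw [Fterm, h b hb, zero_mul]

lemma Ftil_single {α α' : ℕ → ℕ} {m : ℕ} (hm : 2 ≤ m)
    (heq : ∀ j, 1 ≤ j → j ≠ m → α j = α' j)
    (hz : ∀ k, m < k → betatil d p (α k) k = 0) :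
    Ftil d p α' - Ftil d p α
      = (betatil d p (α' m) m - betatil d p (α m) m)
          * ∏ j ∈ Finset.Icc 1 (m-1), ptil d p (α j) j := by
  have hz' : ∀ k, m < k → betatil d p (α' k) k = 0 := by
    intro k hk
    rw [← heq k (by omega) (by omega)]
    exact hz k hk
  have hsup : ∀ k, m - 1 ≤ k → betatil d p (α (k+2)) (k+2) = 0 := fun k hk => hz _ (by omega)
  have hsup' : ∀ k, m - 1 ≤ k → betatil d p (α' (k+2)) (k+2) = 0 := fun k hk => hz' _ (by omega)
  rw [Ftil_eq_sum hsup, Ftil_eq_sum hsup']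
  have h1 : α' 1 = α 1 := (heq 1 le_rfl (by omega)).symm
  rw [h1]
  have hm1 : m - 1 = (m - 2) + 1 := by omega
  rw [hm1, Finset.sum_range_succ, Finset.sum_range_succ]
  have hlow : ∑ k ∈ Finset.range (m-2), Fterm d p α' k
      = ∑ k ∈ Finset.range (m-2), Fterm d p α k := by
    apply Finset.sum_congr rfl
    intro k hk
    rw [Finset.mem_range] at hk
    rw [Fterm, Fterm]
    rw [heq (k+2) (by omega) (by omega)]
    congr 1
    apply Finset.prod_congr rfl
    intro j hj
    rw [Finset.mem_Icc] at hj
    rw [heq j hj.1 (by omega)]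
  rw [hlow]
  have he2 : m - 2 + 2 = m := by omega
  have he1 : m - 2 + 1 = m - 1 := by omega
  rw [Fterm, Fterm, he2, he1]
  have hprod : ∏ j ∈ Finset.Icc 1 (m-1), ptil d p (α' j) j
      = ∏ j ∈ Finset.Icc 1 (m-1), ptil d p (α j) j := by
    apply Finset.prod_congr rfl
    intro j hj
    rw [Finset.mem_Icc] at hj
    rw [heq j hj.1 (by omega)]
  rw [hprod]
  ring

lemma Ftil_single_one {α α' : ℕ → ℕ}
    (heq : ∀ j, 1 ≤ j → j ≠ 1 → α j = α' j)
    (hz : ∀ k, 1 < k → betatil d p (α k) k = 0) :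
    Ftil d p α' - Ftil d p α = beta p (α' 1) 1 - beta p (α 1) 1 := by
  have hz' : ∀ k, 1 < k → betatil d p (α' k) k = 0 := by
    intro k hk
    rw [← heq k (by omega) (by omega)]
    exact hz k hk
  have hsup : ∀ k, 0 ≤ k → betatil d p (α (k+2)) (k+2) = 0 := fun k _ => hz _ (by omega)
  have hsup' : ∀ k, 0 ≤ k → betatil d p (α' (k+2)) (k+2) = 0 := fun k _ => hz' _ (by omega)
  rw [Ftil_eq_sum (K := 0) (fun k hk => hsup k hk), Ftil_eq_sum (K := 0) (fun k hk => hsup' k hk)]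
  simp

end FtilLemmas

section Structure

lemma cast_abs_ge_one {a b : ℕ} (h : a ≠ b) : 1 ≤ |(a:ℝ) - b| := by
  rcases Nat.lt_or_ge a b with h1 | h1
  · have : (a:ℝ) + 1 ≤ b := by exact_mod_cast h1
    rw [abs_sub_comm, abs_of_nonneg (by linarith)]
    linarith
  · have h2 : b < a := lt_of_le_of_ne h1 (Ne.symm h)
    have : (b:ℝ) + 1 ≤ a := by exact_mod_cast h2
    rw [abs_of_nonneg (by linarith)]
    linarith

lemma structure_core (hd : ∀ n, 1 ≤ n → 2 ≤ d n) {ε ε' : ℕ → ℕ}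
    (hv : Valid d ε) (hv' : Valid d ε') (hval : negaVal d ε = negaVal d ε')
    {n : ℕ} (hn1 : 1 ≤ n) (hnne : ε n ≠ ε' n)
    (hmin : ∀ k, 1 ≤ k → k < n → ε k = ε' k)
    (horient : 0 < (-1:ℝ)^(n-1) * ((ε n : ℝ) - (ε' n : ℝ))) :
    (Odd n → ε' n + 1 = ε n) ∧ (¬ Odd n → ε n + 1 = ε' n) ∧
      ∀ m, n < m → ((Odd m → ε m = 0 ∧ ε' m = d m - 1) ∧
        (¬ Odd m → ε m = d m - 1 ∧ ε' m = 0)) := by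
  classical
  set g : ℕ → ℝ := fun k => (-1:ℝ)^k * ((ε (k+1) : ℝ) - (ε' (k+1) : ℝ)) / DD d (k+1) with hg
  have hgterm : ∀ k, g k = nterm d ε k - nterm d ε' k := by
    intro k
    rw [hg, nterm, nterm]
    have : (-1:ℝ)^(k+2) = (-1)^k := by
      rw [pow_add]
      norm_num
    rw [this]
    ring
  have hgsumm : Summable g := by
    apply Summable.congr ((summable_nterm hd hv).sub (summable_nterm hd hv'))
    intro k
    exact (hgterm k).symm
  have hgsum0 : ∑' k, g k = 0 := by
    rw [tsum_congr hgterm, Summable.tsum_sub (summable_nterm hd hv) (summable_nterm hd hv'),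
      ← negaVal_eq, ← negaVal_eq, hval, sub_self]
  have hsplit := Summable.sum_add_tsum_nat_add n hgsumm
  rw [hgsum0] at hsplit
  have hhead : ∑ i ∈ Finset.range n, g i = (-1:ℝ)^(n-1) * ((ε n : ℝ) - (ε' n : ℝ)) / DD d n := by
    have hmem : n - 1 ∈ Finset.range n := by
      rw [Finset.mem_range]; omega
    rw [Finset.sum_eq_single_of_mem (n-1) hmem]
    · rw [hg]
      have h1 : n - 1 + 1 = n := by omega
      simp only [h1]
    · intro b hb hbne
      rw [Finset.mem_range] at hb
      have : ε (b+1) = ε' (b+1) := hmin (b+1) (by omega) (by omega)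
      rw [hg]
      simp [this]
  -- the tail series
  set v : ℕ → ℝ := fun i => (-1:ℝ)^(n+i) * ((ε' (n+1+i) : ℝ) - (ε (n+1+i) : ℝ)) with hvdef
  have hgv : ∀ i, g (i+n) = -(v i / DD d (n+1+i)) := by
    intro i
    have h1 : i + n + 1 = n + 1 + i := by omega
    have h2 : (-1:ℝ)^(i+n) = (-1)^(n+i) := by rw [Nat.add_comm]
    rw [hg, hvdef]
    simp only [h1, h2]
    ring
  have hvsumm : Summable (fun i => v i / DD d (n+1+i)) := by
    have h1 : Summable (fun i => g (i+n)) := (summable_nat_add_iff n).mpr hgsumm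
    apply Summable.congr h1.neg
    intro i
    rw [hgv i]
    ring
  have htailsum : ∑' i, v i / DD d (n+1+i) = (-1:ℝ)^(n-1) * ((ε n : ℝ) - (ε' n : ℝ)) / DD d n := by
    have h1 : ∑' i, g (i+n) = -∑' i, v i / DD d (n+1+i) := by
      rw [← tsum_neg]
      apply tsum_congr
      intro i
      rw [hgv i]
    rw [hhead, h1] at hsplit
    linarith
  -- nonnegative residual series
  set w : ℕ → ℝ := fun i => ((d (n+1+i) : ℝ) - 1) / DD d (n+1+i) - v i / DD d (n+1+i) with hwdef
  have habsv : ∀ i, |v i| ≤ (d (n+1+i) : ℝ) - 1 := by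
    intro i
    rw [hvdef]
    simp only []
    rw [abs_mul, abs_pow, abs_neg, abs_one, one_pow, one_mul]
    have h1 : ε' (n+1+i) < d (n+1+i) := hv' _ (by omega)
    have h2 : ε (n+1+i) < d (n+1+i) := hv _ (by omega)
    rw [abs_sub_le_iff]
    constructor
    · have : (ε' (n+1+i) : ℝ) ≤ (d (n+1+i) : ℝ) - 1 := by
        have : ε' (n+1+i) + 1 ≤ d (n+1+i) := h1
        have := (Nat.cast_le (α := ℝ)).mpr this
        push_cast at this
        linarith
      have h0 : (0:ℝ) ≤ (ε (n+1+i) : ℝ) := Nat.cast_nonneg _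
      linarith
    · have : (ε (n+1+i) : ℝ) ≤ (d (n+1+i) : ℝ) - 1 := by
        have : ε (n+1+i) + 1 ≤ d (n+1+i) := h2
        have := (Nat.cast_le (α := ℝ)).mpr this
        push_cast at this
        linarith
      have h0 : (0:ℝ) ≤ (ε' (n+1+i) : ℝ) := Nat.cast_nonneg _
      linarith
  have hwnonneg : ∀ i, 0 ≤ w i := by
    intro i
    rw [hwdef]
    simp only []
    rw [sub_nonneg, div_le_div_iff_of_pos_right (DD_pos hd _)]
    calc v i ≤ |v i| := le_abs_self _
      _ ≤ (d (n+1+i) : ℝ) - 1 := habsv i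
  have hwsumm : Summable w := (summable_tt hd n).sub hvsumm
  have hwtsum : ∑' i, w i = (1 - (-1:ℝ)^(n-1) * ((ε n : ℝ) - (ε' n : ℝ))) / DD d n := by
    rw [hwdef]
    rw [Summable.tsum_sub (summable_tt hd n) hvsumm, tsum_tt hd n, htailsum]
    ring
  -- σ ≥ 1
  set σ : ℝ := (-1:ℝ)^(n-1) * ((ε n : ℝ) - (ε' n : ℝ)) with hσ
  have hσ1 : 1 ≤ σ := by
    have h1 : |σ| = |(ε n : ℝ) - (ε' n : ℝ)| := by
      rw [hσ, abs_mul, abs_pow, abs_neg, abs_one, one_pow, one_mul]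
    have h2 : 1 ≤ |σ| := by
      rw [h1]
      exact cast_abs_ge_one hnne
    rcases abs_cases σ with ⟨he, _⟩ | ⟨he, _⟩
    · linarith
    · linarith [horient]
  have hDpos : 0 < DD d n := DD_pos hd n
  have hσeq : σ = 1 := by
    by_contra hc
    have h1 : 1 < σ := lt_of_le_of_ne hσ1 (Ne.symm hc)
    have h2 : ∑' i, w i < 0 := by
      rw [hwtsum]
      apply div_neg_of_neg_of_pos _ hDpos
      linarith
    have h3 : 0 ≤ ∑' i, w i := tsum_nonneg hwnonneg
    linarith
  have hwzero : ∀ i, w i = 0 := by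
    have hts : ∑' i, w i = 0 := by
      rw [hwtsum, hσeq]
      simp
    intro i
    by_contra hc
    have h1 : 0 < w i := lt_of_le_of_ne (hwnonneg i) (Ne.symm hc)
    have h2 : w i ≤ ∑' j, w j := Summable.le_tsum hwsumm i (fun j _ => hwnonneg j)
    rw [hts] at h2
    linarith
  have hveq : ∀ i, v i = (d (n+1+i) : ℝ) - 1 := by
    intro i
    have h1 := hwzero i
    rw [hwdef] at h1
    simp only [] at h1
    have h2 : 0 < DD d (n+1+i) := DD_pos hd _
    field_simp at h1
    linarith
  -- conclusions
    
  refine ⟨?_, ?_, ?_⟩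
  · intro hodd
    have he : Even (n-1) := by
      rcases hodd with ⟨t, ht⟩
      exact ⟨t, by omega⟩
    have hpow : (-1:ℝ)^(n-1) = 1 := he.neg_one_pow
    have : (ε n : ℝ) - (ε' n : ℝ) = 1 := by
      have := hσeq
      rw [hσ, hpow, one_mul] at this
      exact this
    have : (ε' n : ℝ) + 1 = (ε n : ℝ) := by linarith
    exact_mod_cast this
  · intro heven
    have ho : Odd (n-1) := by
      rcases Nat.even_or_odd n with h | h
      · rcases h with ⟨t, ht⟩
        exact ⟨t-1, by omega⟩
      · exact absurd h heven
    have hpow : (-1:ℝ)^(n-1) = -1 := ho.neg_one_pow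
    have h1 : (ε' n : ℝ) - (ε n : ℝ) = 1 := by
      have := hσeq
      rw [hσ, hpow] at this
      linarith
    have : (ε n : ℝ) + 1 = (ε' n : ℝ) := by linarith
    exact_mod_cast this
  · intro m hm
    have hi : m = n + 1 + (m - n - 1) := by omega
    have hveqm := hveq (m - n - 1)
    rw [← hi] at hveqm
    have hpowm : (-1:ℝ)^(n + (m - n - 1)) = (-1:ℝ)^(m-1) := by
      congr 1
      omega
    rw [hvdef] at hveqm
    simp only [← hi] at hveqm
    rw [hpowm] at hveqm
    have h1 : ε' m < d m := hv' m (by omega)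
    have h2 : ε m < d m := hv m (by omega)
    have hd2 : 2 ≤ d m := hd m (by omega)
    have hcast1 : (ε' m : ℝ) ≤ (d m : ℝ) - 1 := by
      have : ε' m + 1 ≤ d m := h1
      have := (Nat.cast_le (α := ℝ)).mpr this
      push_cast at this
      linarith
    have hcast2 : (ε m : ℝ) ≤ (d m : ℝ) - 1 := by
      have : ε m + 1 ≤ d m := h2
      have := (Nat.cast_le (α := ℝ)).mpr this
      push_cast at this
      linarith
    constructor
    · intro hodd
      have he : Even (m-1) := by
        rcases hodd with ⟨t, ht⟩
        exact ⟨t, by omega⟩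
      rw [he.neg_one_pow, one_mul] at hveqm
      have hε0 : (ε m : ℝ) = 0 := by
        have h0 : (0:ℝ) ≤ (ε m : ℝ) := Nat.cast_nonneg _
        linarith
      have hεm : ε m = 0 := by exact_mod_cast hε0
      have hε'm : (ε' m : ℝ) = (d m : ℝ) - 1 := by
        rw [hεm] at hveqm
        push_cast at hveqm
        linarith
      constructor
      · exact hεm
      · have : (ε' m : ℝ) = ((d m - 1 : ℕ) : ℝ) := by
          rw [hε'm]
          have : 1 ≤ d m := by omega
          push_cast [Nat.cast_sub this]
          ring
        exact_mod_cast this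
    · intro heven
      have ho : Odd (m-1) := by
        rcases Nat.even_or_odd m with h | h
        · rcases h with ⟨t, ht⟩
          exact ⟨t-1, by omega⟩
        · exact absurd h heven
      rw [ho.neg_one_pow] at hveqm
      have hε'0 : (ε' m : ℝ) = 0 := by
        have h0 : (0:ℝ) ≤ (ε' m : ℝ) := Nat.cast_nonneg _
        nlinarith
      have hε'm : ε' m = 0 := by exact_mod_cast hε'0
      have hεm : (ε m : ℝ) = (d m : ℝ) - 1 := by
        rw [hε'm] at hveqm
        push_cast at hveqm
        linarith
      refine ⟨?_, hε'm⟩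
      have : (ε m : ℝ) = ((d m - 1 : ℕ) : ℝ) := by
        rw [hεm]
        have : 1 ≤ d m := by omega
        push_cast [Nat.cast_sub this]
        ring
      exact_mod_cast this

lemma structure_lemma (hd : ∀ n, 1 ≤ n → 2 ≤ d n) {ε ε' : ℕ → ℕ}
    (hv : Valid d ε) (hv' : Valid d ε') (hval : negaVal d ε = negaVal d ε')
    (hne : ∃ n, 1 ≤ n ∧ ε n ≠ ε' n) :
    ∃ n ζ ζ', 1 ≤ n ∧ ((ζ = ε ∧ ζ' = ε') ∨ (ζ = ε' ∧ ζ' = ε)) ∧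
      (∀ j, 1 ≤ j → j < n → ζ j = ζ' j) ∧
      (Odd n → ζ' n + 1 = ζ n) ∧ (¬ Odd n → ζ n + 1 = ζ' n) ∧
      ∀ m, n < m → ((Odd m → ζ m = 0 ∧ ζ' m = d m - 1) ∧
        (¬ Odd m → ζ m = d m - 1 ∧ ζ' m = 0)) := by
  classical
  set n := Nat.find hne with hn
  have hspec : 1 ≤ n ∧ ε n ≠ ε' n := Nat.find_spec hne
  have hmin : ∀ k, 1 ≤ k → k < n → ε k = ε' k := by
    intro k h1 h2
    have := Nat.find_min hne h2
    push_neg at this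
    exact this h1
  have hne' : (ε n : ℝ) ≠ (ε' n : ℝ) := by
    intro hc
    exact hspec.2 (by exact_mod_cast hc)
  have hpowne : ((-1:ℝ)^(n-1)) ≠ 0 := by
    apply pow_ne_zero
    norm_num
  have horient : (-1:ℝ)^(n-1) * ((ε n : ℝ) - (ε' n : ℝ)) ≠ 0 := by
    apply mul_ne_zero hpowne
    intro hc
    apply hne'
    linarith [sub_eq_zero.mp hc]
  rcases lt_or_gt_of_ne horient with hneg | hpos
  · -- swap roles
    have hcore := structure_core hd hv' hv hval.symm hspec.1 (Ne.symm hspec.2)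
      (fun k h1 h2 => (hmin k h1 h2).symm)
      (by
        have : (-1:ℝ)^(n-1) * ((ε' n : ℝ) - (ε n : ℝ))
            = -((-1:ℝ)^(n-1) * ((ε n : ℝ) - (ε' n : ℝ))) := by ring
        rw [this]
        linarith)
    exact ⟨n, ε', ε, hspec.1, Or.inr ⟨rfl, rfl⟩,
      fun j h1 h2 => (hmin j h1 h2).symm, hcore.1, hcore.2.1, hcore.2.2⟩
  · have hcore := structure_core hd hv hv' hval hspec.1 hspec.2 hmin hpos
    exact ⟨n, ε, ε', hspec.1, Or.inl ⟨rfl, rfl⟩, hmin, hcore.1, hcore.2.1, hcore.2.2⟩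

end Structure


section Eta

variable {d : ℕ → ℕ} {p : ℕ → ℕ → ℝ}

def etaA (d : ℕ → ℕ) (ζ : ℕ → ℕ) (c m j : ℕ) : ℕ :=
  if j = m then (if Odd m then c else d m - 1 - c) else ζ j

def etaB (d : ℕ → ℕ) (ζ' : ℕ → ℕ) (m j : ℕ) : ℕ :=
  if j ≤ m then ζ' j else tailseq d j

lemma etaA_at (ζ : ℕ → ℕ) (c m : ℕ) :
    etaA d ζ c m m = if Odd m then c else d m - 1 - c := if_pos rfl

lemma etaA_ne (ζ : ℕ → ℕ) (c m : ℕ) {j : ℕ} (h : j ≠ m) : etaA d ζ c m j = ζ j := if_neg h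

lemma etaB_le (ζ' : ℕ → ℕ) (m : ℕ) {j : ℕ} (h : j ≤ m) : etaB d ζ' m j = ζ' j := if_pos h

lemma etaB_gt (ζ' : ℕ → ℕ) (m : ℕ) {j : ℕ} (h : ¬ j ≤ m) : etaB d ζ' m j = tailseq d j :=
  if_neg h

end Eta
end NP

open NP

/-- If p_{ε,n}·p_{ε−1,n} < 0 for all n and all ε ∈ {1,…,d_n−1}, and the
limits of ∏_{k≤n} d_k p_{0,k} and ∏_{k≤n} d_k p_{d_k−1,k} are not both 0, then F̃ is not
differentiable at any nega-(d_n)-rational point x₀ of [0,1]. -/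
theorem Ftil_not_differentiable_at_rational (d : ℕ → ℕ) (hd : ∀ n, 1 ≤ n → 2 ≤ d n)
    (p : ℕ → ℕ → ℝ)
    (hp : ∀ n, 1 ≤ n → ∀ i, i < d n → p i n ∈ Set.Ioo (-1 : ℝ) 1)
    (hsum : ∀ n, 1 ≤ n → ∑ i ∈ Finset.range (d n), p i n = 1)
    (hprod : ∀ ι : ℕ → ℕ, (∀ n, 1 ≤ n → ι n < d n) →
      Filter.Tendsto (fun n => ∏ j ∈ Finset.Icc 1 n, |p (ι j) j|) Filter.atTop (nhds 0))
    (hbeta : ∀ n, 1 ≤ n → ∀ i, 1 ≤ i → i < d n → 0 < beta p i n)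
    (hsign : ∀ n, 1 ≤ n → ∀ e, 1 ≤ e → e < d n → p e n * p (e - 1) n < 0)
    (hnotboth : ¬ (Filter.Tendsto
        (fun n => ∏ k ∈ Finset.Icc 1 n, (d k : ℝ) * p 0 k) Filter.atTop (nhds 0) ∧
      Filter.Tendsto
        (fun n => ∏ k ∈ Finset.Icc 1 n, (d k : ℝ) * p (d k - 1) k) Filter.atTop (nhds 0)))
    (F : ℝ → ℝ)
    (hF : ∀ x ∈ Set.Icc (0 : ℝ) 1, ∀ ε : ℕ → ℕ, IsNegaRepr d ε x → F x = Ftil d p ε)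
    (x₀ : ℝ) (hx₀ : x₀ ∈ Set.Icc (0 : ℝ) 1)
    (ε ε' : ℕ → ℕ) (h₁ : IsNegaRepr d ε x₀) (h₂ : IsNegaRepr d ε' x₀)
    (hne : ∃ n, 1 ≤ n ∧ ε n ≠ ε' n) :
    ¬ DifferentiableAt ℝ F x₀ := by
  intro hdiff
  have hder : HasDerivAt F (deriv F x₀) x₀ := hdiff.hasDerivAt
  set L := deriv F x₀ with hLdef
  have hslope : Filter.Tendsto (slope F x₀) (nhdsWithin x₀ {x₀}ᶜ) (nhds L) :=
    hasDerivAt_iff_tendsto_slope.mp hder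
  -- basic sign facts
  have hd3 : ∀ k, 1 ≤ k → 3 ≤ d k := by
    intro k hk
    by_contra hc
    have hdk : d k = 2 := by have := hd k hk; omega
    have h0 : 0 < p 0 k := by
      have := hbeta k hk 1 le_rfl (by omega)
      rwa [beta_one] at this
    have h1 : p 1 k * p 0 k < 0 := hsign k hk 1 le_rfl (by omega)
    have hs : p 0 k + p 1 k = 1 := by
      have := hsum k hk
      rw [hdk] at this
      rw [Finset.sum_range_succ, Finset.sum_range_one] at this
      linarith
    have h0' : p 0 k < 1 := (hp k hk 0 (by omega)).2
    nlinarith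
  have hp0 : ∀ k, 1 ≤ k → 0 < p 0 k := by
    intro k hk
    have := hbeta k hk 1 le_rfl (by have := hd3 k hk; omega)
    rwa [beta_one] at this
  have hp1 : ∀ k, 1 ≤ k → p 1 k < 0 := by
    intro k hk
    have := hsign k hk 1 le_rfl (by have := hd3 k hk; omega)
    nlinarith [hp0 k hk]
  have hpne : ∀ k, 1 ≤ k → ∀ i, i < d k → p i k ≠ 0 := by
    intro k hk i hi
    rcases Nat.eq_zero_or_pos i with rfl | hipos
    · exact ne_of_gt (hp0 k hk)
    · intro hc
      have := hsign k hk i hipos hi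
      rw [hc, zero_mul] at this
      exact lt_irrefl _ this
  -- structure of the two representations
  have hval : negaVal d ε = negaVal d ε' := by rw [← h₁.2, ← h₂.2]
  obtain ⟨n, ζ, ζ', hn1, hzz, hlow, hoddn, hevenn, htail⟩ :=
    structure_lemma hd h₁.1 h₂.1 hval hne
  have hζv : Valid d ζ := by
    rcases hzz with ⟨rfl, rfl⟩ | ⟨rfl, rfl⟩
    · exact h₁.1
    · exact h₂.1
  have hζ'v : Valid d ζ' := by
    rcases hzz with ⟨rfl, rfl⟩ | ⟨rfl, rfl⟩
    · exact h₂.1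
    · exact h₁.1
  have hx0ζ : x₀ = negaVal d ζ := by
    rcases hzz with ⟨rfl, rfl⟩ | ⟨rfl, rfl⟩
    · exact h₁.2
    · exact h₂.2
  have hx0ζ' : x₀ = negaVal d ζ' := by
    rcases hzz with ⟨rfl, rfl⟩ | ⟨rfl, rfl⟩
    · exact h₂.2
    · exact h₁.2
  clear hzz hval hne hprod hder
  -- tail digit facts
  have hζtail : ∀ m, n < m → ζ m = tailseq d m := by
    intro m hm
    rcases Nat.even_or_odd m with hev | hod
    · rw [tailseq, if_neg (Nat.not_odd_iff_even.mpr hev)]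
      exact ((htail m hm).2 (Nat.not_odd_iff_even.mpr hev)).1
    · rw [tailseq, if_pos hod]
      exact ((htail m hm).1 hod).1
  have hζ'odd : ∀ m, n < m → Odd m → ζ' m = d m - 1 := fun m hm h => ((htail m hm).1 h).2
  have hζ'even : ∀ m, n < m → ¬ Odd m → ζ' m = 0 := fun m hm h => ((htail m hm).2 h).2
  have hbz : ∀ k, n < k → betatil d p (ζ k) k = 0 := by
    intro k hk
    rw [hζtail k hk]
    exact betatil_tailseq k
  have hptilζ : ∀ j, n < j → ptil d p (ζ j) j = p 0 j := by
    intro j hj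
    rcases Nat.even_or_odd j with hev | hod
    · have hnodd : ¬ Odd j := Nat.not_odd_iff_even.mpr hev
      rw [ptil_even hnodd, hζtail j hj, tailseq, if_neg hnodd, Nat.sub_self]
    · rw [ptil_odd hod, hζtail j hj, tailseq, if_pos hod]
  have hptilζ' : ∀ j, n < j → ptil d p (ζ' j) j = p (d j - 1) j := by
    intro j hj
    rcases Nat.even_or_odd j with hev | hod
    · have hnodd : ¬ Odd j := Nat.not_odd_iff_even.mpr hev
      rw [ptil_even hnodd, hζ'even j hj hnodd, Nat.sub_zero]
    · rw [ptil_odd hod, hζ'odd j hj hod]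
  -- validity of perturbed sequences
  have hηAv : ∀ c m, c ≤ 2 → n < m → Valid d (etaA d ζ c m) := by
    intro c m hc2 hm j hj
    by_cases hjm : j = m
    · subst hjm
      rw [etaA_at]
      have h3 := hd3 j (by omega)
      by_cases hod : Odd j
      · rw [if_pos hod]; omega
      · rw [if_neg hod]; omega
    · rw [etaA_ne _ _ _ hjm]
      exact hζv j hj
  have hηBv : ∀ m, Valid d (etaB d ζ' m) := by
    intro m j hj
    by_cases hjm : j ≤ m
    · rw [etaB_le _ _ hjm]; exact hζ'v j hj
    · rw [etaB_gt _ _ hjm]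
      have h2 := hd j hj
      rw [tailseq]
      by_cases hod : Odd j
      · rw [if_pos hod]; omega
      · rw [if_neg hod]; omega
  -- values of the perturbed points
  have hAval : ∀ c m, 1 ≤ c → c ≤ 2 → n < m →
      negaVal d (etaA d ζ c m) = x₀ + (c:ℝ) / DD d m := by
    intro c m hc1 hc2 hm
    have heq : ∀ j, 1 ≤ j → j ≠ m → ζ j = etaA d ζ c m j := by
      intro j _ hjm
      rw [etaA_ne _ _ _ hjm]
    have hsing := negaVal_single hd hζv (hηAv c m hc2 hm) m (by omega) heq
    have h3 := hd3 m (by omega)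
    have hres : (-1:ℝ)^(m+1) * ((etaA d ζ c m m : ℝ) - (ζ m : ℝ)) = (c:ℝ) := by
      rcases Nat.even_or_odd m with hev | hod
      · have hnodd : ¬ Odd m := Nat.not_odd_iff_even.mpr hev
        have hζm : ζ m = d m - 1 := by
          rw [hζtail m hm, tailseq, if_neg hnodd]
        have hpow : (-1:ℝ)^(m+1) = -1 := (hev.add_one).neg_one_pow
        rw [etaA_at, if_neg hnodd, hζm, hpow]
        have e1 : ((d m - 1 - c : ℕ) : ℝ) = (d m : ℝ) - 1 - c := by
          have hcle : c ≤ d m - 1 := by omega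
          rw [Nat.cast_sub hcle, Nat.cast_sub (by omega : 1 ≤ d m)]
          push_cast
          ring
        have e2 : ((d m - 1 : ℕ) : ℝ) = (d m : ℝ) - 1 := by
          rw [Nat.cast_sub (by omega : 1 ≤ d m)]
          push_cast
          ring
        rw [e1, e2]
        ring
      · have hζm : ζ m = 0 := by
          rw [hζtail m hm, tailseq, if_pos hod]
        have hpow : (-1:ℝ)^(m+1) = 1 := (hod.add_one).neg_one_pow
        rw [etaA_at, if_pos hod, hζm, hpow]
        push_cast
        ring
    rw [mul_div_assoc] at hsing
    rw [hx0ζ]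
    have : ((etaA d ζ c m m : ℝ) - (ζ m : ℝ)) / DD d m = (c:ℝ) / ((-1:ℝ)^(m+1) * DD d m) := by
      rw [← hres]
      have hpm : (-1:ℝ)^(m+1) ≠ 0 := pow_ne_zero _ (by norm_num)
      have hDne : DD d m ≠ 0 := DD_ne hd m
      field_simp
    rw [this] at hsing
    have hpm2 : ((-1:ℝ)^(m+1)) * ((-1:ℝ)^(m+1)) = 1 := by
      rcases neg_one_pow_eq_or ℝ (m+1) with h | h <;> rw [h] <;> norm_num
    have : (-1:ℝ)^(m+1) * ((c:ℝ) / ((-1:ℝ)^(m+1) * DD d m)) = (c:ℝ) / DD d m := by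
      have hDne : DD d m ≠ 0 := DD_ne hd m
      have hpm : (-1:ℝ)^(m+1) ≠ 0 := pow_ne_zero _ (by norm_num)
      field_simp
    rw [this] at hsing
    linarith [hsing]
  have hBval : ∀ m, n < m → negaVal d (etaB d ζ' m) = x₀ - 1 / DD d m := by
    intro m hm
    have heq : ∀ j, 1 ≤ j → j ≤ m → ζ' j = etaB d ζ' m j := by
      intro j _ hjm
      rw [etaB_le _ _ hjm]
    have htl : ∀ j, m < j →
        (-1:ℝ)^(j+1) * ((etaB d ζ' m j : ℝ) - (ζ' j : ℝ)) = -((d j:ℝ) - 1) := by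
      intro j hj
      have hjn : n < j := by omega
      have hηBj : etaB d ζ' m j = tailseq d j := etaB_gt _ _ (by omega)
      have hd1 : 1 ≤ d j := by have := hd j (by omega); omega
      have e2 : ((d j - 1 : ℕ) : ℝ) = (d j : ℝ) - 1 := by
        rw [Nat.cast_sub hd1]
        push_cast
        ring
      rcases Nat.even_or_odd j with hev | hod
      · have hnodd : ¬ Odd j := Nat.not_odd_iff_even.mpr hev
        have hpow : (-1:ℝ)^(j+1) = -1 := (hev.add_one).neg_one_pow
        rw [hηBj, tailseq, if_neg hnodd, hζ'even j hjn hnodd, hpow, e2]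
        push_cast
        ring
      · have hpow : (-1:ℝ)^(j+1) = 1 := (hod.add_one).neg_one_pow
        rw [hηBj, tailseq, if_pos hod, hζ'odd j hjn hod, hpow, e2]
        push_cast
        ring
    have htail2 := negaVal_tail hd hζ'v (hηBv m) m heq htl
    rw [hx0ζ']
    linarith [htail2]
  -- F values
  have hFx₀ : F x₀ = Ftil d p ζ := hF x₀ hx₀ ζ ⟨hζv, hx0ζ⟩
  -- Ftil differences, A family
  have hAF : ∀ c m, 1 ≤ c → c ≤ 2 → n < m →
      Ftil d p (etaA d ζ c m) - Ftil d p ζ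
        = beta p c m * ∏ j ∈ Finset.Icc 1 (m-1), ptil d p (ζ j) j := by
    intro c m hc1 hc2 hm
    have heq : ∀ j, 1 ≤ j → j ≠ m → ζ j = etaA d ζ c m j := by
      intro j _ hjm
      rw [etaA_ne _ _ _ hjm]
    have hz : ∀ k, m < k → betatil d p (ζ k) k = 0 := fun k hk => hbz k (by omega)
    have hs := Ftil_single (by omega : 2 ≤ m) heq hz
    rw [hs]
    congr 1
    have h3 := hd3 m (by omega)
    rw [hbz m hm, sub_zero, etaA_at]
    rcases Nat.even_or_odd m with hev | hod
    · have hnodd : ¬ Odd m := Nat.not_odd_iff_even.mpr hev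
      rw [if_neg hnodd, betatil_even hnodd]
      congr 1
      omega
    · rw [if_pos hod, betatil_odd hod]
  -- Ftil differences, B family (telescoping induction)
  have hδb : betatil d p (ζ' n) n - betatil d p (ζ n) n = -(ptil d p (ζ' n) n) := by
    rcases Nat.even_or_odd n with hev | hod
    · have hnodd : ¬ Odd n := Nat.not_odd_iff_even.mpr hev
      have he := hevenn hnodd
      have hζ'n : ζ' n < d n := hζ'v n hn1
      have ht : d n - 1 - ζ n = (d n - 1 - ζ' n) + 1 := by omega
      rw [betatil_even hnodd, betatil_even hnodd, ptil_even hnodd, ht, beta_succ]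
      ring
    · have hb := hoddn hod
      rw [betatil_odd hod, betatil_odd hod, ptil_odd hod, ← hb, beta_succ]
      ring
  have hBF : ∀ t, Ftil d p (etaB d ζ' (n+t)) - Ftil d p ζ
      = -(∏ j ∈ Finset.Icc 1 (n+t), ptil d p (ζ' j) j) := by
    intro t
    induction t with
    | zero =>
      rw [Nat.add_zero]
      have heq : ∀ j, 1 ≤ j → j ≠ n → ζ j = etaB d ζ' n j := by
        intro j hj hjn
        rcases Nat.lt_or_ge j n with h | h
        · rw [etaB_le _ _ (by omega), hlow j hj h]
        · rw [etaB_gt _ _ (by omega), hζtail j (by omega)]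
      have hz : ∀ k, n < k → betatil d p (ζ k) k = 0 := fun k hk => hbz k hk
      have hηBn : etaB d ζ' n n = ζ' n := etaB_le _ _ le_rfl
      rcases Nat.lt_or_ge n 2 with hn2 | hn2
      · -- n = 1
        have hn1' : n = 1 := by omega
        subst hn1'
        have hs := Ftil_single_one heq hz
        rw [hs, hηBn]
        rw [Finset.Icc_self, Finset.prod_singleton]
        have hδb' := hδb
        rw [betatil_odd (by decide), betatil_odd (by decide)] at hδb'
        linarith [hδb']
      · have hs := Ftil_single hn2 heq hz
        rw [hs, hηBn, hδb]
        have hpc : ∏ j ∈ Finset.Icc 1 (n-1), ptil d p (ζ j) j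
            = ∏ j ∈ Finset.Icc 1 (n-1), ptil d p (ζ' j) j := by
          apply Finset.prod_congr rfl
          intro j hj
          rw [Finset.mem_Icc] at hj
          rw [hlow j hj.1 (by omega)]
        rw [hpc]
        obtain ⟨n', rfl⟩ : ∃ n', n = n' + 1 := ⟨n - 1, by omega⟩
        rw [Finset.prod_Icc_succ_top (by omega : 1 ≤ n' + 1)]
        simp only [Nat.add_sub_cancel]
        ring
    | succ t ih =>
      have hstep : Ftil d p (etaB d ζ' (n+t+1)) - Ftil d p (etaB d ζ' (n+t))
          = (1 - p (d (n+t+1) - 1) (n+t+1))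
              * ∏ j ∈ Finset.Icc 1 (n+t), ptil d p (ζ' j) j := by
        have heq : ∀ j, 1 ≤ j → j ≠ n+t+1 → etaB d ζ' (n+t) j = etaB d ζ' (n+t+1) j := by
          intro j _ hjm
          rcases Nat.lt_or_ge (n+t) j with h | h
          · rw [etaB_gt _ _ (by omega), etaB_gt _ _ (by omega)]
          · rw [etaB_le _ _ (by omega), etaB_le _ _ (by omega)]
        have hz : ∀ k, n+t+1 < k → betatil d p (etaB d ζ' (n+t) k) k = 0 := by
          intro k hk
          rw [etaB_gt _ _ (by omega)]
          exact betatil_tailseq k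
        have hs := Ftil_single (by omega : 2 ≤ n+t+1) heq hz
        rw [hs]
        have hη1 : etaB d ζ' (n+t+1) (n+t+1) = ζ' (n+t+1) := etaB_le _ _ le_rfl
        have hη0 : etaB d ζ' (n+t) (n+t+1) = tailseq d (n+t+1) := etaB_gt _ _ (by omega)
        have hβ : betatil d p (ζ' (n+t+1)) (n+t+1) = beta p (d (n+t+1) - 1) (n+t+1) := by
          rcases Nat.even_or_odd (n+t+1) with hev | hod
          · have hnodd : ¬ Odd (n+t+1) := Nat.not_odd_iff_even.mpr hev
            rw [betatil_even hnodd, hζ'even (n+t+1) (by omega) hnodd, Nat.sub_zero]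
          · rw [betatil_odd hod, hζ'odd (n+t+1) (by omega) hod]
        have hβ1 : beta p (d (n+t+1) - 1) (n+t+1) = 1 - p (d (n+t+1) - 1) (n+t+1) := by
          have hd1 : 1 ≤ d (n+t+1) := by have := hd (n+t+1) (by omega); omega
          have hfull : beta p (d (n+t+1)) (n+t+1) = 1 := hsum (n+t+1) (by omega)
          have hrec : beta p (d (n+t+1) - 1 + 1) (n+t+1)
              = beta p (d (n+t+1) - 1) (n+t+1) + p (d (n+t+1) - 1) (n+t+1) := beta_succ _ _
          rw [show d (n+t+1) - 1 + 1 = d (n+t+1) by omega] at hrec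
          rw [hfull] at hrec
          linarith
        have hprod : ∏ j ∈ Finset.Icc 1 (n+t+1-1), ptil d p (etaB d ζ' (n+t) j) j
            = ∏ j ∈ Finset.Icc 1 (n+t), ptil d p (ζ' j) j := by
          rw [show n+t+1-1 = n+t by omega]
          apply Finset.prod_congr rfl
          intro j hj
          rw [Finset.mem_Icc] at hj
          rw [etaB_le _ _ hj.2]
        rw [hη1, hη0, betatil_tailseq, hβ, hβ1, hprod, sub_zero]
      have hcomb : Ftil d p (etaB d ζ' (n+t+1)) - Ftil d p ζ
          = -(∏ j ∈ Finset.Icc 1 (n+t), ptil d p (ζ' j) j)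
            + (1 - p (d (n+t+1) - 1) (n+t+1))
              * ∏ j ∈ Finset.Icc 1 (n+t), ptil d p (ζ' j) j := by
        rw [← ih]
        linarith [hstep]
      rw [show n+(t+1) = (n+t)+1 by omega]
      rw [hcomb]
      rw [Finset.prod_Icc_succ_top (by omega : 1 ≤ n+t+1)]
      rw [hptilζ' (n+t+1) (by omega)]
      ring
  -- slope computations
  have hslopeA : ∀ c m : ℕ, 1 ≤ c → c ≤ 2 → n < m →
      slope F x₀ (x₀ + (c:ℝ)/DD d m)
        = beta p c m * (DD d m * ∏ j ∈ Finset.Icc 1 (m-1), ptil d p (ζ j) j) / c := by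
    intro c m hc1 hc2 hm
    have hyval := hAval c m hc1 hc2 hm
    have hymem : x₀ + (c:ℝ)/DD d m ∈ Set.Icc (0:ℝ) 1 := by
      rw [← hyval]
      exact negaVal_mem hd (hηAv c m hc2 hm)
    have hFy : F (x₀ + (c:ℝ)/DD d m) = Ftil d p (etaA d ζ c m) :=
      hF _ hymem (etaA d ζ c m) ⟨hηAv c m hc2 hm, hyval.symm⟩
    rw [slope_def_field, hFy, hFx₀, hAF c m hc1 hc2 hm, add_sub_cancel_left]
    have hDne : DD d m ≠ 0 := DD_ne hd m
    have hcne : (c:ℝ) ≠ 0 := by positivity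
    field_simp
  have hslopeB : ∀ m, n < m →
      slope F x₀ (x₀ - 1/DD d m)
        = DD d m * ∏ j ∈ Finset.Icc 1 m, ptil d p (ζ' j) j := by
    intro m hm
    have hyval := hBval m hm
    have hymem : x₀ - 1/DD d m ∈ Set.Icc (0:ℝ) 1 := by
      rw [← hyval]
      exact negaVal_mem hd (hηBv m)
    have hFy : F (x₀ - 1/DD d m) = Ftil d p (etaB d ζ' m) :=
      hF _ hymem (etaB d ζ' m) ⟨hηBv m, hyval.symm⟩
    have hBFm : Ftil d p (etaB d ζ' m) - Ftil d p ζ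
        = -(∏ j ∈ Finset.Icc 1 m, ptil d p (ζ' j) j) := by
      have hb := hBF (m - n)
      rw [show n + (m-n) = m by omega] at hb
      exact hb
    rw [slope_def_field, hFy, hFx₀, hBFm]
    have hDne : DD d m ≠ 0 := DD_ne hd m
    rw [show x₀ - 1/DD d m - x₀ = -(1/DD d m) by ring]
    field_simp
  -- sequences tending to x₀
  have hDD0 : Filter.Tendsto (fun k => 1 / DD d (n+1+k)) Filter.atTop (nhds 0) :=
    tendsto_one_div_DD hd (n+1)
  have hyAt : ∀ c : ℕ, 1 ≤ c →
      Filter.Tendsto (fun k => x₀ + (c:ℝ)/DD d (n+1+k)) Filter.atTop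
        (nhdsWithin x₀ {x₀}ᶜ) := by
    intro c hc
    rw [tendsto_nhdsWithin_iff]
    constructor
    · have h1 : Filter.Tendsto (fun k => (c:ℝ) * (1/DD d (n+1+k))) Filter.atTop
          (nhds ((c:ℝ) * 0)) := hDD0.const_mul _
      rw [mul_zero] at h1
      have h2 := (tendsto_const_nhds :
        Filter.Tendsto (fun _ : ℕ => x₀) Filter.atTop (nhds x₀)).add h1
      rw [add_zero] at h2
      apply h2.congr
      intro k
      rw [mul_one_div]
    · apply Filter.Eventually.of_forall
      intro k
      have hpos : 0 < (c:ℝ)/DD d (n+1+k) := by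
        apply div_pos _ (DD_pos hd _)
        exact_mod_cast hc
      simp only [Set.mem_compl_iff, Set.mem_singleton_iff]
      intro hcon
      have h0 : (c:ℝ)/DD d (n+1+k) = 0 := by linarith
      linarith
  have hyBt : Filter.Tendsto (fun k => x₀ - 1/DD d (n+1+k)) Filter.atTop
      (nhdsWithin x₀ {x₀}ᶜ) := by
    rw [tendsto_nhdsWithin_iff]
    constructor
    · have h2 := (tendsto_const_nhds :
        Filter.Tendsto (fun _ : ℕ => x₀) Filter.atTop (nhds x₀)).sub hDD0
      rw [sub_zero] at h2
      exact h2
    · apply Filter.Eventually.of_forall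
      intro k
      have hpos : 0 < 1/DD d (n+1+k) := div_pos one_pos (DD_pos hd _)
      simp only [Set.mem_compl_iff, Set.mem_singleton_iff]
      intro hcon
      linarith
  -- limits of the slope sequences
  have hTA : ∀ c : ℕ, 1 ≤ c → c ≤ 2 →
      Filter.Tendsto (fun k => beta p c (n+1+k)
        * (DD d (n+1+k) * ∏ j ∈ Finset.Icc 1 (n+1+k-1), ptil d p (ζ j) j) / c)
        Filter.atTop (nhds L) := by
    intro c h1 h2
    have hcomp := hslope.comp (hyAt c h1)
    apply hcomp.congr
    intro k
    exact hslopeA c (n+1+k) h1 h2 (by omega)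
  have hTB : Filter.Tendsto (fun k => DD d (n+1+k)
      * ∏ j ∈ Finset.Icc 1 (n+1+k), ptil d p (ζ' j) j) Filter.atTop (nhds L) := by
    have hcomp := hslope.comp hyBt
    apply hcomp.congr
    intro k
    exact hslopeB (n+1+k) (by omega)
  -- endgame arithmetic
  have hA1 : Filter.Tendsto (fun k => p 0 (n+1+k)
      * (DD d (n+1+k) * ∏ j ∈ Finset.Icc 1 (n+1+k-1), ptil d p (ζ j) j))
      Filter.atTop (nhds L) := by
    apply (hTA 1 le_rfl (by omega)).congr
    intro k
    rw [beta_one, Nat.cast_one, div_one]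
  have hA2 : Filter.Tendsto (fun k => (p 0 (n+1+k) + p 1 (n+1+k))
      * (DD d (n+1+k) * ∏ j ∈ Finset.Icc 1 (n+1+k-1), ptil d p (ζ j) j))
      Filter.atTop (nhds (2*L)) := by
    have h3 := (hTA 2 (by omega) le_rfl).const_mul 2
    apply h3.congr
    intro k
    rw [beta_two, Nat.cast_two]
    ring
  have hdiff0 : Filter.Tendsto (fun k => (p 1 (n+1+k) - p 0 (n+1+k))
      * (DD d (n+1+k) * ∏ j ∈ Finset.Icc 1 (n+1+k-1), ptil d p (ζ j) j))
      Filter.atTop (nhds 0) := by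
    have h3 := hA2.sub (hA1.const_mul 2)
    rw [show 2*L - 2*L = 0 by ring] at h3
    apply h3.congr
    intro k
    ring
  have hA10 : Filter.Tendsto (fun k => p 0 (n+1+k)
      * (DD d (n+1+k) * ∏ j ∈ Finset.Icc 1 (n+1+k-1), ptil d p (ζ j) j))
      Filter.atTop (nhds 0) := by
    apply squeeze_zero_norm _ (by simpa only [norm_zero] using hdiff0.norm)
    intro k
    have hk1 : 1 ≤ n+1+k := by omega
    have h0 := hp0 (n+1+k) hk1
    have h1 := hp1 (n+1+k) hk1
    have key : |p 0 (n+1+k)| ≤ |p 1 (n+1+k) - p 0 (n+1+k)| := by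
      rw [abs_of_pos h0, abs_of_neg (by linarith : p 1 (n+1+k) - p 0 (n+1+k) < 0)]
      linarith
    calc ‖p 0 (n+1+k) * (DD d (n+1+k) * ∏ j ∈ Finset.Icc 1 (n+1+k-1), ptil d p (ζ j) j)‖
        = |p 0 (n+1+k)| * |DD d (n+1+k) * ∏ j ∈ Finset.Icc 1 (n+1+k-1), ptil d p (ζ j) j| := by
          rw [Real.norm_eq_abs]
          exact abs_mul _ _
      _ ≤ |p 1 (n+1+k) - p 0 (n+1+k)|
            * |DD d (n+1+k) * ∏ j ∈ Finset.Icc 1 (n+1+k-1), ptil d p (ζ j) j| :=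
          mul_le_mul_of_nonneg_right key (abs_nonneg _)
      _ = ‖(p 1 (n+1+k) - p 0 (n+1+k))
            * (DD d (n+1+k) * ∏ j ∈ Finset.Icc 1 (n+1+k-1), ptil d p (ζ j) j)‖ := by
          simp [Real.norm_eq_abs, abs_mul, Finset.abs_prod]
  have hL0 : L = 0 := tendsto_nhds_unique hA1 hA10
  rw [hL0] at hTB
  -- product identities
  have hIsplit : ∀ (f : ℕ → ℝ) (m : ℕ), n ≤ m →
      ∏ j ∈ Finset.Icc 1 m, f j
        = (∏ j ∈ Finset.Icc 1 n, f j) * ∏ j ∈ Finset.Ioc n m, f j := by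
    intro f m hm
    rw [show (Finset.Icc 1 m : Finset ℕ) = Finset.Ioc 0 m from Finset.Icc_add_one_left_eq_Ioc 0 m,
      show (Finset.Icc 1 n : Finset ℕ) = Finset.Ioc 0 n from Finset.Icc_add_one_left_eq_Ioc 0 n]
    exact (Finset.prod_Ioc_consecutive f (Nat.zero_le n) hm).symm
  have hptil_ne : ∀ (α : ℕ → ℕ), Valid d α → ∀ j, 1 ≤ j → ptil d p (α j) j ≠ 0 := by
    intro α hαv j hj
    rcases Nat.even_or_odd j with hev | hod
    · have hnodd : ¬ Odd j := Nat.not_odd_iff_even.mpr hev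
      rw [ptil_even hnodd]
      apply hpne j hj
      have := hd j hj
      omega
    · rw [ptil_odd hod]
      exact hpne j hj _ (hαv j hj)
  have hCA : DD d n * ∏ j ∈ Finset.Icc 1 n, ptil d p (ζ j) j ≠ 0 := by
    apply mul_ne_zero (DD_ne hd n)
    rw [Finset.prod_ne_zero_iff]
    intro j hj
    rw [Finset.mem_Icc] at hj
    exact hptil_ne ζ hζv j hj.1
  have hCB : DD d n * ∏ j ∈ Finset.Icc 1 n, ptil d p (ζ' j) j ≠ 0 := by
    apply mul_ne_zero (DD_ne hd n)
    rw [Finset.prod_ne_zero_iff]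
    intro j hj
    rw [Finset.mem_Icc] at hj
    exact hptil_ne ζ' hζ'v j hj.1
  have hQid : ∀ m, n < m →
      p 0 m * (DD d m * ∏ j ∈ Finset.Icc 1 (m-1), ptil d p (ζ j) j)
        = (DD d n * ∏ j ∈ Finset.Icc 1 n, ptil d p (ζ j) j)
            * ∏ j ∈ Finset.Ioc n m, ((d j:ℝ) * p 0 j) := by
    intro m hm
    obtain ⟨m', rfl⟩ : ∃ m', m = m' + 1 := ⟨m - 1, by omega⟩
    have hDsplit : DD d (m'+1) = DD d n * ∏ j ∈ Finset.Ioc n (m'+1), (d j : ℝ) :=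
      hIsplit _ _ (by omega)
    have hPsplit : ∏ j ∈ Finset.Icc 1 (m'+1-1), ptil d p (ζ j) j
        = (∏ j ∈ Finset.Icc 1 n, ptil d p (ζ j) j)
            * ∏ j ∈ Finset.Ioc n m', ptil d p (ζ j) j := by
      rw [show m'+1-1 = m' by omega]
      exact hIsplit _ _ (by omega)
    have hcongr : ∏ j ∈ Finset.Ioc n m', ptil d p (ζ j) j
        = ∏ j ∈ Finset.Ioc n m', p 0 j := by
      apply Finset.prod_congr rfl
      intro j hj
      rw [Finset.mem_Ioc] at hj
      exact hptilζ j hj.1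
    have hstep : (∏ j ∈ Finset.Ioc n m', p 0 j) * p 0 (m'+1)
        = ∏ j ∈ Finset.Ioc n (m'+1), p 0 j :=
      (Finset.prod_Ioc_succ_top (by omega : n ≤ m') _).symm
    have hdsep : ∏ j ∈ Finset.Ioc n (m'+1), ((d j:ℝ) * p 0 j)
        = (∏ j ∈ Finset.Ioc n (m'+1), (d j:ℝ)) * ∏ j ∈ Finset.Ioc n (m'+1), p 0 j :=
      Finset.prod_mul_distrib
    rw [hDsplit, hPsplit, hcongr, hdsep, ← hstep]
    ring
  have hWid : ∀ m, n < m →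
      DD d m * ∏ j ∈ Finset.Icc 1 m, ptil d p (ζ' j) j
        = (DD d n * ∏ j ∈ Finset.Icc 1 n, ptil d p (ζ' j) j)
            * ∏ j ∈ Finset.Ioc n m, ((d j:ℝ) * p (d j - 1) j) := by
    intro m hm
    have hDsplit : DD d m = DD d n * ∏ j ∈ Finset.Ioc n m, (d j : ℝ) :=
      hIsplit _ _ (by omega)
    have hPsplit : ∏ j ∈ Finset.Icc 1 m, ptil d p (ζ' j) j
        = (∏ j ∈ Finset.Icc 1 n, ptil d p (ζ' j) j)
            * ∏ j ∈ Finset.Ioc n m, ptil d p (ζ' j) j :=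
      hIsplit _ _ (by omega)
    have hcongr : ∏ j ∈ Finset.Ioc n m, ptil d p (ζ' j) j
        = ∏ j ∈ Finset.Ioc n m, p (d j - 1) j := by
      apply Finset.prod_congr rfl
      intro j hj
      rw [Finset.mem_Ioc] at hj
      exact hptilζ' j hj.1
    have hdsep : ∏ j ∈ Finset.Ioc n m, ((d j:ℝ) * p (d j - 1) j)
        = (∏ j ∈ Finset.Ioc n m, (d j:ℝ)) * ∏ j ∈ Finset.Ioc n m, p (d j - 1) j :=
      Finset.prod_mul_distrib
    rw [hDsplit, hPsplit, hcongr, hdsep]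
    ring
  -- conclude both products tend to zero
  have htoIocA : Filter.Tendsto (fun k => ∏ j ∈ Finset.Ioc n (n+1+k), ((d j:ℝ) * p 0 j))
      Filter.atTop (nhds 0) := by
    have h1 := hA10.div_const (DD d n * ∏ j ∈ Finset.Icc 1 n, ptil d p (ζ j) j)
    rw [zero_div] at h1
    apply h1.congr
    intro k
    rw [div_eq_iff hCA, hQid (n+1+k) (by omega)]
    ring
  have hfullA : Filter.Tendsto (fun k => ∏ j ∈ Finset.Icc 1 (n+1+k), ((d j:ℝ) * p 0 j))
      Filter.atTop (nhds 0) := by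
    have h1 := htoIocA.const_mul (∏ j ∈ Finset.Icc 1 n, ((d j:ℝ) * p 0 j))
    rw [mul_zero] at h1
    apply h1.congr
    intro k
    rw [← hIsplit _ _ (by omega)]
  have hAfinal : Filter.Tendsto (fun m => ∏ k ∈ Finset.Icc 1 m, (d k:ℝ) * p 0 k)
      Filter.atTop (nhds 0) :=
    (Filter.tendsto_add_atTop_iff_nat (n+1)).mp
      (hfullA.congr fun k => by rw [Nat.add_comm (n+1) k])
  have htoIocB : Filter.Tendsto
      (fun k => ∏ j ∈ Finset.Ioc n (n+1+k), ((d j:ℝ) * p (d j - 1) j))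
      Filter.atTop (nhds 0) := by
    have h1 := hTB.div_const (DD d n * ∏ j ∈ Finset.Icc 1 n, ptil d p (ζ' j) j)
    rw [zero_div] at h1
    apply h1.congr
    intro k
    rw [div_eq_iff hCB, hWid (n+1+k) (by omega)]
    ring
  have hfullB : Filter.Tendsto
      (fun k => ∏ j ∈ Finset.Icc 1 (n+1+k), ((d j:ℝ) * p (d j - 1) j))
      Filter.atTop (nhds 0) := by
    have h1 := htoIocB.const_mul (∏ j ∈ Finset.Icc 1 n, ((d j:ℝ) * p (d j - 1) j))
    rw [mul_zero] at h1
    apply h1.congr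
    intro k
    rw [← hIsplit _ _ (by omega)]
  have hBfinal : Filter.Tendsto (fun m => ∏ k ∈ Finset.Icc 1 m, (d k:ℝ) * p (d k - 1) k)
      Filter.atTop (nhds 0) :=
    (Filter.tendsto_add_atTop_iff_nat (n+1)).mp
      (hfullB.congr fun k => by rw [Nat.add_comm (n+1) k])
  exact hnotboth ⟨hAfinal, hBfinal⟩
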